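/- Let m ≥ 3 and n ≥ 3 with m = 2d₁+1 and n = 2d₂+1. The states of Eqs. (45) together with the mn − 2(m+n) + 4 additional product states |i⟩⊗|j⟩ for 1 ≤ i ≤ m−2 and 1 ≤ j ≤ n−2 form a complete orthogonal set of mn vectors spanning ℂ^m ⊗ ℂ^n; in particular the set of Eqs. (45) is completable to an orthogonal product basis. -/

import Mathlib

/-- basis vector |k⟩ of ℂ^N -/
def ketN (N k : ℕ) : Fin N → ℂ := fun i => if (i : ℕ) = k then 1 else 0

/-- |k⟩ ± |l⟩ in ℂ^N (`s = true` is `+`, `s = false` is `-`) -/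
def pmN (N k l : ℕ) (s : Bool) : Fin N → ℂ :=
  fun i => (if (i : ℕ) = k then 1 else 0) + (if s then 1 else -1) * (if (i : ℕ) = l then 1 else 0)

/-- product state a ⊗ b in ℂ^m ⊗ ℂ^n -/
def prodMN {m n : ℕ} (a : Fin m → ℂ) (b : Fin n → ℂ) : Fin m × Fin n → ℂ :=
  fun p => a p.1 * b p.2

/-- index set for the 2(m+n)−4 = 4d₁+4d₂ states of Eqs. (45) -/
abbrev Idx45 (d₁ d₂ : ℕ) :=
  (Fin d₂ × Bool) ⊕ (Fin d₁ × Bool) ⊕ (Fin d₂ × Bool) ⊕ (Fin d₁ × Bool)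

/-- the states of Eqs. (45) in ℂ^m ⊗ ℂ^n with m = 2d₁+1, n = 2d₂+1 -/
def psi45 (d₁ d₂ : ℕ) : Idx45 d₁ d₂ → (Fin (2*d₁+1) × Fin (2*d₂+1) → ℂ)
  | .inl (δ, s) => prodMN (ketN (2*d₁+1) 0) (pmN (2*d₂+1) (2*δ) (2*δ+1) s)
  | .inr (.inl (σ, s)) => prodMN (pmN (2*d₁+1) (2*σ) (2*σ+1) s) (ketN (2*d₂+1) (2*d₂))
  | .inr (.inr (.inl (δ, s))) => prodMN (ketN (2*d₁+1) (2*d₁)) (pmN (2*d₂+1) (2*δ+1) (2*δ+2) s)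
  | .inr (.inr (.inr (σ, s))) => prodMN (pmN (2*d₁+1) (2*σ+1) (2*σ+2) s) (ketN (2*d₂+1) 0)

/-- the states of Eqs. (45) together with the (m−2)(n−2) extra states |i⟩⊗|j⟩,
    1 ≤ i ≤ m−2, 1 ≤ j ≤ n−2 -/
def fullFamily (d₁ d₂ : ℕ) :
    (Idx45 d₁ d₂ ⊕ (Fin (2*d₁-1) × Fin (2*d₂-1))) →
      (Fin (2*d₁+1) × Fin (2*d₂+1) → ℂ)
  | .inl k => psi45 d₁ d₂ k
  | .inr (i, j) => prodMN (ketN (2*d₁+1) ((i : ℕ)+1)) (ketN (2*d₂+1) ((j : ℕ)+1))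

noncomputable def cdot {N : ℕ} (a b : Fin N → ℂ) : ℂ := ∑ i, (starRingEnd ℂ) (a i) * b i

lemma sum_prod {m n : ℕ} (a c : Fin m → ℂ) (b d : Fin n → ℂ) :
    ∑ p : Fin m × Fin n, (starRingEnd ℂ) (prodMN a b p) * prodMN c d p = cdot a c * cdot b d := by
  rw [cdot, cdot, Finset.sum_mul_sum, Fintype.sum_prod_type]
  simp only [prodMN, map_mul]
  congr 1; ext i; congr 1; ext j; ring

lemma cdot_ket_left {N k : ℕ} (h : k < N) (x : Fin N → ℂ) :
    cdot (ketN N k) x = x ⟨k, h⟩ := by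
  rw [cdot]
  rw [Finset.sum_eq_single ⟨k, h⟩]
  · simp [ketN]
  · intro i _ hi
    have : (i : ℕ) ≠ k := fun hh => hi (Fin.ext hh)
    simp [ketN, this]
  · simp

lemma ketN_oob {N k : ℕ} (h : N ≤ k) : ketN N k = 0 := by
  funext i
  have : (i : ℕ) ≠ k := by have := i.isLt; omega
  simp [ketN, this]

lemma cdot_ket_ket {N a b : ℕ} :
    cdot (ketN N a) (ketN N b) = if a = b ∧ b < N then 1 else 0 := by
  rcases lt_or_ge a N with h | h
  · rw [cdot_ket_left h]
    simp only [ketN]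
    split_ifs with h1 h2 h2 <;> first | rfl | omega
  · rw [ketN_oob h, cdot]
    simp only [Pi.zero_apply, map_zero, zero_mul, Finset.sum_const_zero]
    split_ifs with h1 <;> first | omega | rfl

lemma cdot_pm_left_exp {N k l : ℕ} (s : Bool) (x : Fin N → ℂ) :
    cdot (pmN N k l s) x = cdot (ketN N k) x + (if s then 1 else -1) * cdot (ketN N l) x := by
  rw [cdot, cdot, cdot, Finset.mul_sum, ← Finset.sum_add_distrib]
  congr 1; funext i
  simp only [pmN, ketN, map_add, map_mul]
  cases s <;> simp <;> split_ifs <;> ring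

lemma cdot_pm_right_exp {N k l : ℕ} (s : Bool) (x : Fin N → ℂ) :
    cdot x (pmN N k l s) = cdot x (ketN N k) + (if s then 1 else -1) * cdot x (ketN N l) := by
  rw [cdot, cdot, cdot, Finset.mul_sum, ← Finset.sum_add_distrib]
  congr 1; funext i
  simp only [pmN, ketN]
  cases s <;> simp <;> split_ifs <;> ring

set_option maxHeartbeats 1000000 in
theorem psi45_completable (d₁ d₂ : ℕ) (hd₁ : 1 ≤ d₁) (hd₂ : 1 ≤ d₂) :
    (∀ s t, s ≠ t →
      ∑ p : Fin (2*d₁+1) × Fin (2*d₂+1),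
        (starRingEnd ℂ) (fullFamily d₁ d₂ s p) * fullFamily d₁ d₂ t p = 0) ∧
    (∀ s, fullFamily d₁ d₂ s ≠ 0) ∧
    Submodule.span ℂ (Set.range (fullFamily d₁ d₂)) = ⊤ := by
  have horth : ∀ s t, s ≠ t →
      ∑ p : Fin (2*d₁+1) × Fin (2*d₂+1),
        (starRingEnd ℂ) (fullFamily d₁ d₂ s p) * fullFamily d₁ d₂ t p = 0 := by
    intro s t hst
    rcases s with (⟨δ, sb⟩ | ⟨σ, sb⟩ | ⟨δ, sb⟩ | ⟨σ, sb⟩) | ⟨i, j⟩ <;>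
      rcases t with (⟨δ', tb⟩ | ⟨σ', tb⟩ | ⟨δ', tb⟩ | ⟨σ', tb⟩) | ⟨i', j'⟩ <;>
      simp only [fullFamily, psi45] <;> rw [sum_prod] <;>
      simp only [cdot_pm_left_exp, cdot_pm_right_exp, cdot_ket_ket]
    all_goals (try have b1 := δ.isLt; try have b2 := δ'.isLt)
    all_goals (try have b3 := σ.isLt; try have b4 := σ'.isLt)
    all_goals (try have b5 := i.isLt; try have b6 := i'.isLt)
    all_goals (try have b7 := j.isLt; try have b8 := j'.isLt)
    all_goals try (split_ifs <;> first | omega | norm_num)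
    all_goals (
      first
      | (simp_all; done)
      | (apply hst
         simp only [Sum.inl.injEq, Sum.inr.injEq, Prod.mk.injEq]
         exact ⟨Fin.ext (by omega), by first | exact Fin.ext (by omega) | simp_all⟩))
  have hnz : ∀ s, fullFamily d₁ d₂ s ≠ 0 := by
    intro s h
    rcases s with (⟨δ, sb⟩ | ⟨σ, sb⟩ | ⟨δ, sb⟩ | ⟨σ, sb⟩) | ⟨i, j⟩
    · have b1 := δ.isLt
      have h0 := congrFun h (⟨0, by omega⟩, ⟨2*(δ:ℕ), by omega⟩)
      cases sb <;> simp [fullFamily, psi45, prodMN, ketN, pmN] at h0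
    · have b1 := σ.isLt
      have h0 := congrFun h (⟨2*(σ:ℕ), by omega⟩, ⟨2*d₂, by omega⟩)
      cases sb <;> simp [fullFamily, psi45, prodMN, ketN, pmN] at h0
    · have b1 := δ.isLt
      have h0 := congrFun h (⟨2*d₁, by omega⟩, ⟨2*(δ:ℕ)+1, by omega⟩)
      cases sb <;> simp [fullFamily, psi45, prodMN, ketN, pmN] at h0
    · have b1 := σ.isLt
      have h0 := congrFun h (⟨2*(σ:ℕ)+1, by omega⟩, ⟨0, by omega⟩)
      cases sb <;> simp [fullFamily, psi45, prodMN, ketN, pmN] at h0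
    · have b1 := i.isLt; have b2 := j.isLt
      have h0 := congrFun h (⟨(i:ℕ)+1, by omega⟩, ⟨(j:ℕ)+1, by omega⟩)
      simp [fullFamily, prodMN, ketN] at h0
  refine ⟨horth, hnz, ?_⟩
  classical
  let e := WithLp.linearEquiv 2 ℂ ((Fin (2*d₁+1) × Fin (2*d₂+1)) → ℂ)
  let F : _ → EuclideanSpace ℂ (Fin (2*d₁+1) × Fin (2*d₂+1)) :=
    fun s => e.symm (fullFamily d₁ d₂ s)
  have hFnz : ∀ s, F s ≠ 0 := by
    intro s hF
    exact hnz s (by simpa [F] using congrArg e hF)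
  have hFo : Pairwise fun s t => (inner ℂ (F s) (F t) : ℂ) = 0 := by
    intro s t hst
    have := horth s t hst
    simpa [F, e, PiLp.inner_apply, RCLike.inner_apply, WithLp.linearEquiv_symm_apply,
      WithLp.coe_symm_linearEquiv, PiLp.toLp_apply, mul_comm] using this
  have li : LinearIndependent ℂ F := linearIndependent_of_ne_zero_of_inner_eq_zero hFnz hFo
  have hcard : Fintype.card (Idx45 d₁ d₂ ⊕ (Fin (2*d₁-1) × Fin (2*d₂-1)))
      = Module.finrank ℂ (EuclideanSpace ℂ (Fin (2*d₁+1) × Fin (2*d₂+1))) := by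
    simp only [finrank_euclideanSpace, Fintype.card_sum, Fintype.card_prod, Fintype.card_bool,
      Fintype.card_fin]
    obtain ⟨a, rfl⟩ : ∃ a, d₁ = a + 1 := ⟨d₁ - 1, by omega⟩
    obtain ⟨b, rfl⟩ : ∃ b, d₂ = b + 1 := ⟨d₂ - 1, by omega⟩
    have e1 : 2*(a+1)-1 = 2*a+1 := by omega
    have e2 : 2*(b+1)-1 = 2*b+1 := by omega
    rw [e1, e2]; ring
  have hspanF : Submodule.span ℂ (Set.range F) = ⊤ :=
    li.span_eq_top_of_card_eq_finrank' hcard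
  have h1 : Submodule.map (e.symm : ((Fin (2*d₁+1) × Fin (2*d₂+1)) → ℂ) →ₗ[ℂ] EuclideanSpace ℂ (Fin (2*d₁+1) × Fin (2*d₂+1)))
      (Submodule.span ℂ (Set.range (fullFamily d₁ d₂))) = ⊤ := by
    rw [Submodule.map_span, ← Set.range_comp]
    exact hspanF
  have h3 : Submodule.map (e.symm : ((Fin (2*d₁+1) × Fin (2*d₂+1)) → ℂ) →ₗ[ℂ] EuclideanSpace ℂ (Fin (2*d₁+1) × Fin (2*d₂+1))) ⊤ = ⊤ := by
    rw [Submodule.map_top, LinearEquiv.range]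
  exact Submodule.map_injective_of_injective e.symm.injective (h1.trans h3.symm)
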